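/- Lower incomplete moments of the GLMGA distribution: for all σ > 0, a > 0, b > 0, every real r > 0 with rσ < 1/2, and every u > 0, ∫_0^u y^r f_{σ,a,b}(y) dy = [(2b)^{-σr} B(1/2 − rσ, a + rσ)/B(1/2,a)] · ( 1 − I_{1/2−rσ, a+rσ}( u^{-1/σ}/(u^{-1/σ} + 2b) ) ). -/

import Mathlib

open MeasureTheory Real Filter Topology

/-- The (real) beta function `B(m,n) = ∫_0^1 t^(m-1) (1-t)^(n-1) dt`. -/
noncomputable def betaFn (m n : ℝ) : ℝ :=
  ∫ t in (0:ℝ)..1, t ^ (m - 1) * (1 - t) ^ (n - 1)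

/-- The regularized incomplete beta function `I_{m,n}(v)`. -/
noncomputable def regIncBeta (m n v : ℝ) : ℝ :=
  (∫ t in (0:ℝ)..v, t ^ (m - 1) * (1 - t) ^ (n - 1)) / betaFn m n

/-- The GLMGA density `f_{σ,a,b}`. -/
noncomputable def glmga (σ a b y : ℝ) : ℝ :=
  (2 * b) ^ a / (σ * betaFn a (1 / 2)) * y ^ (-(1 / (2 * σ) + 1))
    / (y ^ (-1 / σ) + 2 * b) ^ (a + 1 / 2)

/- ### Auxiliary lemmas -/

lemma betaKernel_half {m n : ℝ} (hm : 0 < m) :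
    IntervalIntegrable (fun t : ℝ => t ^ (m - 1) * (1 - t) ^ (n - 1)) volume 0 (1/2) := by
  have hg : IntervalIntegrable (fun t : ℝ => ((1/2:ℝ) ^ (n-1) + 1) * t ^ (m - 1)) volume 0 (1/2) :=
    (intervalIntegral.intervalIntegrable_rpow' (by linarith)).const_mul _
  refine hg.mono_fun (by apply Measurable.aestronglyMeasurable; fun_prop) ?_
  rw [Set.uIoc_of_le (by norm_num : (0:ℝ) ≤ 1/2)]
  filter_upwards [ae_restrict_mem measurableSet_Ioc] with t ht
  have ht0 : 0 < t := ht.1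
  have ht1 : (0:ℝ) < 1 - t := by linarith [ht.2]
  have hb : (1 - t) ^ (n - 1) ≤ (1/2:ℝ) ^ (n-1) + 1 := by
    rcases le_or_gt (n - 1) 0 with h | h
    · have : (1 - t) ^ (n - 1) ≤ (1/2:ℝ) ^ (n-1) :=
        rpow_le_rpow_of_nonpos (by norm_num) (by linarith [ht.2]) h
      linarith
    · have : (1 - t) ^ (n - 1) ≤ (1:ℝ) ^ (n-1) :=
        rpow_le_rpow ht1.le (by linarith [ht0]) h.le
      rw [one_rpow] at this; linarith [rpow_pos_of_pos (by norm_num : (0:ℝ) < 1/2) (n-1)]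
  have h1 : (0:ℝ) ≤ t ^ (m-1) := (rpow_pos_of_pos ht0 _).le
  have h2 : (0:ℝ) ≤ (1-t) ^ (n-1) := (rpow_pos_of_pos ht1 _).le
  rw [Real.norm_eq_abs, Real.norm_eq_abs, abs_of_nonneg (mul_nonneg h1 h2),
    abs_of_nonneg (mul_nonneg (by positivity) h1)]
  rw [mul_comm (t ^ (m-1))]
  exact mul_le_mul_of_nonneg_right hb h1

lemma betaKernel_intble {m n : ℝ} (hm : 0 < m) (hn : 0 < n) :
    IntervalIntegrable (fun t : ℝ => t ^ (m - 1) * (1 - t) ^ (n - 1)) volume 0 1 := by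
  have h2 := (betaKernel_half (n := m) hn).comp_sub_left 1
  norm_num at h2
  have h2' : IntervalIntegrable (fun t : ℝ => t ^ (m - 1) * (1 - t) ^ (n - 1)) volume (1/2) 1 := by
    refine (h2.congr ?_).symm
    intro t _
    simp [sub_sub_cancel, mul_comm]
  exact (betaKernel_half hm).trans h2'

lemma betaFn_pos {m n : ℝ} (hm : 0 < m) (hn : 0 < n) : 0 < betaFn m n := by
  refine intervalIntegral.intervalIntegral_pos_of_pos_on (betaKernel_intble hm hn) ?_ one_pos
  intro t ht
  exact mul_pos (rpow_pos_of_pos ht.1 _) (rpow_pos_of_pos (by linarith [ht.2]) _)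

lemma betaFn_symm (m n : ℝ) : betaFn m n = betaFn n m := by
  unfold betaFn
  have := intervalIntegral.integral_comp_sub_left
    (fun x : ℝ => x ^ (n - 1) * (1 - x) ^ (m - 1)) 1 (a := 0) (b := 1)
  norm_num at this
  rw [← this]
  congr 1
  ext t
  exact mul_comm _ _

lemma glmga_deriv_eq {σ a b r y : ℝ} (hσ : 0 < σ) (hb : 0 < b) (hy : 0 < y) :
    y ^ r * glmga σ a b y
      = (2*b) ^ (-(σ*r)) / betaFn a (1/2) *
        (0 - (y ^ (-1/σ) / (y ^ (-1/σ) + 2*b)) ^ ((1/2 - r*σ) - 1)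
            * (1 - y ^ (-1/σ) / (y ^ (-1/σ) + 2*b)) ^ ((a + r*σ) - 1)
            * (-1/σ * y ^ (-1/σ - 1) * (2*b) / (y ^ (-1/σ) + 2*b) ^ 2)) := by
  have hb2 : (0:ℝ) < 2*b := by linarith
  have hx : (0:ℝ) < y ^ (-1/σ) := rpow_pos_of_pos hy _
  have hs : (0:ℝ) < y ^ (-1/σ) + 2*b := by linarith
  have h1 : 1 - y ^ (-1/σ) / (y ^ (-1/σ) + 2*b) = 2*b / (y ^ (-1/σ) + 2*b) := by
    field_simp
    ring
  rw [h1, div_rpow hx.le hs.le, div_rpow hb2.le hs.le, ← Real.rpow_mul hy.le]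
  unfold glmga
  rw [show ((y ^ (-1/σ) + 2*b):ℝ) ^ (2:ℕ) = (y ^ (-1/σ) + 2*b) ^ ((2:ℕ):ℝ) from
    (Real.rpow_natCast _ _).symm]
  have hdiv : ∀ (X e : ℝ), X / (y ^ (-1/σ) + 2*b) ^ e = X * (y ^ (-1/σ) + 2*b) ^ (-e) := by
    intro X e; rw [Real.rpow_neg hs.le, div_eq_mul_inv]
  rw [hdiv, hdiv, hdiv, hdiv]
  have hy1 : y ^ (-1/σ * (1/2 - r*σ - 1)) * y ^ (-1/σ - 1)
      = y ^ r * y ^ (-(1/(2*σ)+1)) := by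
    rw [← rpow_add hy, ← rpow_add hy]; congr 1; field_simp; ring
  have hbsplit : (2*b) ^ (-(σ*r)) * ((2*b) ^ (a + r*σ - 1) * (2*b)) = (2*b) ^ a := by
    rw [← Real.rpow_add_one hb2.ne', ← rpow_add hb2]; congr 1; ring
  have hssplit : (y ^ (-1/σ) + 2*b) ^ (-(1/2 - r*σ - 1))
        * ((y ^ (-1/σ) + 2*b) ^ (-(a + r*σ - 1)) * (y ^ (-1/σ) + 2*b) ^ (-((2:ℕ):ℝ)))
      = (y ^ (-1/σ) + 2*b) ^ (-(a + 1/2)) := by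
    rw [← rpow_add hs, ← rpow_add hs]
    congr 1; push_cast; ring
  refine Eq.symm ?_
  calc (2*b) ^ (-(σ*r)) / betaFn a (1/2) *
        (0 - y ^ (-1/σ * (1/2 - r*σ - 1)) * (y ^ (-1/σ) + 2*b) ^ (-(1/2 - r*σ - 1))
            * ((2*b) ^ (a + r*σ - 1) * (y ^ (-1/σ) + 2*b) ^ (-(a + r*σ - 1)))
            * (-1/σ * y ^ (-1/σ - 1) * (2*b) * (y ^ (-1/σ) + 2*b) ^ (-((2:ℕ):ℝ))))
      = (1/(σ * betaFn a (1/2)))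
          * (y ^ (-1/σ * (1/2 - r*σ - 1)) * y ^ (-1/σ - 1))
          * ((2*b) ^ (-(σ*r)) * ((2*b) ^ (a + r*σ - 1) * (2*b)))
          * ((y ^ (-1/σ) + 2*b) ^ (-(1/2 - r*σ - 1))
              * ((y ^ (-1/σ) + 2*b) ^ (-(a + r*σ - 1))
                  * (y ^ (-1/σ) + 2*b) ^ (-((2:ℕ):ℝ)))) := by
        ring
    _ = (1/(σ * betaFn a (1/2))) * (y ^ r * y ^ (-(1/(2*σ)+1))) * (2*b) ^ a
          * (y ^ (-1/σ) + 2*b) ^ (-(a + 1/2)) := by rw [hy1, hbsplit, hssplit]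
    _ = y ^ r * ((2 * b) ^ a / (σ * betaFn a (1 / 2)) * y ^ (-(1 / (2 * σ) + 1))
          * (y ^ (-1 / σ) + 2 * b) ^ (-(a + 1 / 2))) := by
        ring

/-- lower incomplete moments of the GLMGA distribution. -/
theorem glmga_lower_incomplete_moment (σ a b r u : ℝ) (hσ : 0 < σ) (ha : 0 < a)
    (hb : 0 < b) (hr : 0 < r) (hrσ : r * σ < 1 / 2) (hu : 0 < u) :
    ∫ y in (0:ℝ)..u, y ^ r * glmga σ a b y
      = (2 * b) ^ (-(σ * r)) * betaFn (1 / 2 - r * σ) (a + r * σ) / betaFn (1 / 2) a *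
        (1 - regIncBeta (1 / 2 - r * σ) (a + r * σ)
            (u ^ (-1 / σ) / (u ^ (-1 / σ) + 2 * b))) := by
  have hb2 : (0:ℝ) < 2 * b := by linarith
  have hm : (0:ℝ) < 1/2 - r*σ := by linarith
  have hn : (0:ℝ) < a + r*σ := by positivity
  have hB : (0:ℝ) < betaFn a (1/2) := betaFn_pos ha (by norm_num)
  set F : ℝ → ℝ := fun t => t ^ ((1/2 - r*σ) - 1) * (1 - t) ^ ((a + r*σ) - 1) with hF_def
  have hF : IntervalIntegrable F volume 0 1 := betaKernel_intble hm hn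
  set G : ℝ → ℝ := fun s => ∫ t in (0:ℝ)..s, F t with hG_def
  set V : ℝ → ℝ := fun y => y ^ (-1/σ) / (y ^ (-1/σ) + 2*b) with hV_def
  have hX : ∀ y : ℝ, 0 < y → (0:ℝ) < y ^ (-1/σ) := fun y hy => rpow_pos_of_pos hy _
  have hs : ∀ y : ℝ, 0 < y → (0:ℝ) < y ^ (-1/σ) + 2*b := fun y hy => by
    linarith [hX y hy]
  have hV0 : ∀ y : ℝ, 0 < y → 0 < V y := fun y hy => div_pos (hX y hy) (hs y hy)
  have hV1 : ∀ y : ℝ, 0 < y → V y < 1 := fun y hy =>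
    (div_lt_one (hs y hy)).2 (by linarith [hX y hy])
  -- derivative of the primitive G
  have hGd : ∀ s ∈ Set.Ioo (0:ℝ) 1, HasDerivAt G (F s) s := by
    intro s hs'
    refine intervalIntegral.integral_hasDerivAt_right
      (hF.mono_set (Set.uIcc_subset_uIcc Set.left_mem_uIcc ?_))
      ⟨Set.univ, Filter.univ_mem, (by apply Measurable.aestronglyMeasurable; fun_prop :
        AEStronglyMeasurable F (volume.restrict Set.univ))⟩ ?_
    · rw [Set.uIcc_of_le zero_le_one]; exact Set.mem_Icc.2 ⟨hs'.1.le, hs'.2.le⟩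
    · have c1 : ContinuousAt (fun t : ℝ => t ^ ((1/2 - r*σ) - 1)) s :=
        Real.continuousAt_rpow_const s _ (Or.inl hs'.1.ne')
      have c2 : ContinuousAt (fun t : ℝ => (1 - t) ^ ((a + r*σ) - 1)) s := by
        have := (Real.continuousAt_rpow_const (1 - s) ((a + r*σ) - 1)
          (Or.inl (by linarith [hs'.2] : (1:ℝ) - s ≠ 0))).comp
          ((continuous_const.sub continuous_id).continuousAt (x := s))
        exact this
      exact c1.mul c2
  -- derivative of V
  have hVd : ∀ y : ℝ, 0 < y → HasDerivAt V
      (-1/σ * y ^ (-1/σ - 1) * (2*b) / (y ^ (-1/σ) + 2*b) ^ 2) y := by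
    intro y hy
    have h₁ : HasDerivAt (fun z : ℝ => z ^ (-1/σ)) (-1/σ * y ^ (-1/σ - 1)) y :=
      Real.hasDerivAt_rpow_const (Or.inl hy.ne')
    have h₂ : HasDerivAt (fun z : ℝ => z ^ (-1/σ) + 2*b) (-1/σ * y ^ (-1/σ - 1)) y :=
      h₁.add_const _
    have h₃ := h₁.div h₂ (hs y hy).ne'
    refine h₃.congr_deriv ?_
    ring
  set Φ : ℝ → ℝ := fun y => (2*b) ^ (-(σ*r)) / betaFn a (1/2) *
    (betaFn (1/2 - r*σ) (a + r*σ) - G (V y)) with hΦ_def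
  -- derivative of Φ
  have key : ∀ y ∈ Set.Ioo (0:ℝ) u, HasDerivAt Φ (y ^ r * glmga σ a b y) y := by
    intro y hy'
    have hy := hy'.1
    have hcomp : HasDerivAt (fun z => G (V z))
        (F (V y) * (-1/σ * y ^ (-1/σ - 1) * (2*b) / (y ^ (-1/σ) + 2*b) ^ 2)) y :=
      (hGd (V y) ⟨hV0 y hy, hV1 y hy⟩).comp y (hVd y hy)
    have hΦd := (hcomp.const_sub (betaFn (1/2 - r*σ) (a + r*σ))).const_mul
      ((2*b) ^ (-(σ*r)) / betaFn a (1/2))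
    refine hΦd.congr_deriv (Eq.symm ?_)
    rw [glmga_deriv_eq hσ hb hy]
    simp only [hF_def, hV_def, zero_sub]
  -- integrability of the integrand
  have hInt : IntervalIntegrable (fun y => y ^ r * glmga σ a b y) volume 0 u := by
    have hgint : IntervalIntegrable
        (fun y : ℝ => (2*b) ^ a / (σ * betaFn a (1/2)) * y ^ (r + a/σ - 1)) volume 0 u := by
      refine (intervalIntegral.intervalIntegrable_rpow' ?_).const_mul _
      have : (0:ℝ) < a/σ := by positivity
      linarith
    refine hgint.mono_fun (by apply Measurable.aestronglyMeasurable; unfold glmga; fun_prop) ?_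
    rw [Set.uIoc_of_le hu.le]
    filter_upwards [ae_restrict_mem measurableSet_Ioc] with y hy
    have hy0 : 0 < y := hy.1
    have hx := hX y hy0
    have hsy := hs y hy0
    have hM : (0:ℝ) < (2*b) ^ a / (σ * betaFn a (1/2)) := by positivity
    have e3 : y ^ r * glmga σ a b y = (2*b) ^ a / (σ * betaFn a (1/2))
        * (y ^ r * y ^ (-(1/(2*σ)+1)) * (y ^ (-1/σ) + 2*b) ^ (-(a+1/2))) := by
      unfold glmga
      rw [Real.rpow_neg hsy.le]
      ring
    have e4 : (y ^ (-1/σ) + 2*b) ^ (-(a+1/2)) ≤ (y ^ (-1/σ)) ^ (-(a+1/2)) :=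
      rpow_le_rpow_of_nonpos hx (by linarith) (by linarith)
    have e5 : (y ^ (-1/σ)) ^ (-(a+1/2)) = y ^ ((-1/σ) * (-(a+1/2))) :=
      (Real.rpow_mul hy0.le _ _).symm
    have e6 : y ^ r * y ^ (-(1/(2*σ)+1)) * y ^ ((-1/σ) * (-(a+1/2))) = y ^ (r + a/σ - 1) := by
      rw [← rpow_add hy0, ← rpow_add hy0]; congr 1; field_simp; ring
    have hbnd : y ^ r * glmga σ a b y
        ≤ (2*b) ^ a / (σ * betaFn a (1/2)) * y ^ (r + a/σ - 1) := by
      rw [e3, ← e6, ← e5]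
      refine mul_le_mul_of_nonneg_left ?_ hM.le
      refine mul_le_mul_of_nonneg_left e4 ?_
      positivity
    have hnn : 0 ≤ y ^ r * glmga σ a b y := by
      rw [e3]; positivity
    rw [Real.norm_eq_abs, Real.norm_eq_abs, abs_of_nonneg hnn, abs_of_nonneg (by positivity)]
    exact hbnd
  -- limit of Φ at 0⁺
  have hVtop : Tendsto (fun y : ℝ => y ^ (-1/σ)) (𝓝[>] (0:ℝ)) atTop := by
    have h1 : Tendsto (fun y : ℝ => y⁻¹) (𝓝[>] (0:ℝ)) atTop := tendsto_inv_nhdsGT_zero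
    have h2 : Tendsto (fun x : ℝ => x ^ (1/σ)) atTop atTop :=
      tendsto_rpow_atTop (by positivity)
    refine (h2.comp h1).congr' ?_
    filter_upwards [self_mem_nhdsWithin] with y (hy : 0 < y)
    show (y⁻¹) ^ (1/σ) = y ^ (-1/σ)
    rw [← Real.rpow_neg_one y, ← Real.rpow_mul hy.le]
    congr 1; ring
  have hVlim : Tendsto V (𝓝[>] (0:ℝ)) (𝓝 1) := by
    have h0 : Tendsto (fun x : ℝ => 2*b / (x + 2*b)) atTop (𝓝 0) :=
      Filter.Tendsto.div_atTop tendsto_const_nhds (tendsto_atTop_add_const_right _ _ tendsto_id)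
    have h1 : Tendsto (fun x : ℝ => x / (x + 2*b)) atTop (𝓝 1) := by
      have := (tendsto_const_nhds (x := (1:ℝ)) (f := atTop)).sub h0
      rw [sub_zero] at this
      refine this.congr' ?_
      filter_upwards [eventually_gt_atTop 0] with x hx
      have : x + 2*b ≠ 0 := by linarith
      field_simp
      ring
    exact h1.comp hVtop
  have hGcont : ContinuousOn G (Set.uIcc 0 1) :=
    intervalIntegral.continuousOn_primitive_interval' hF Set.left_mem_uIcc
  have hGV0 : Tendsto (fun y => G (V y)) (𝓝[>] (0:ℝ)) (𝓝 (G 1)) := by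
    have hVin : Tendsto V (𝓝[>] (0:ℝ)) (𝓝[Set.uIcc 0 1] 1) := by
      rw [tendsto_nhdsWithin_iff]
      refine ⟨hVlim, ?_⟩
      filter_upwards [self_mem_nhdsWithin] with y (hy : 0 < y)
      rw [Set.uIcc_of_le zero_le_one]
      exact ⟨(hV0 y hy).le, (hV1 y hy).le⟩
    exact (hGcont 1 Set.right_mem_uIcc).tendsto.comp hVin
  have hG1 : G 1 = betaFn (1/2 - r*σ) (a + r*σ) := rfl
  have hΦ0 : Tendsto Φ (𝓝[>] (0:ℝ)) (𝓝 0) := by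
    have := (tendsto_const_nhds (x := betaFn (1/2 - r*σ) (a + r*σ))
      (f := 𝓝[>] (0:ℝ))).sub hGV0
    have h2 := this.const_mul ((2*b) ^ (-(σ*r)) / betaFn a (1/2))
    rw [hG1, sub_self, mul_zero] at h2
    exact h2
  -- limit of Φ at u⁻
  have hΦu : Tendsto Φ (𝓝[<] u) (𝓝 (Φ u)) := by
    have hGc : ContinuousAt (fun z => G (V z)) u :=
      ((hGd (V u) ⟨hV0 u hu, hV1 u hu⟩).continuousAt).comp (hVd u hu).continuousAt
    have hc : ContinuousAt Φ u := continuousAt_const.mul (continuousAt_const.sub hGc)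
    exact hc.continuousWithinAt
  have hmain := intervalIntegral.integral_eq_sub_of_hasDerivAt_of_tendsto hu key hInt hΦ0 hΦu
  rw [hmain, hΦ_def]
  have hT : (0:ℝ) < betaFn (1/2 - r*σ) (a + r*σ) := betaFn_pos hm hn
  have hreg : regIncBeta (1/2 - r*σ) (a + r*σ) (u ^ (-1/σ) / (u ^ (-1/σ) + 2*b))
      = G (V u) / betaFn (1/2 - r*σ) (a + r*σ) := rfl
  rw [betaFn_symm (1/2) a, hreg, sub_zero]
  have h1 : (2 * b) ^ (-(σ * r)) * betaFn (1/2 - r*σ) (a + r*σ) / betaFn a (1/2)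
        * (G (V u) / betaFn (1/2 - r*σ) (a + r*σ))
      = (2 * b) ^ (-(σ * r)) / betaFn a (1/2) * G (V u) := by
    have h2 : (2 * b) ^ (-(σ * r)) * betaFn (1/2 - r*σ) (a + r*σ) / betaFn a (1/2)
          * (G (V u) / betaFn (1/2 - r*σ) (a + r*σ))
        = (2 * b) ^ (-(σ * r)) / betaFn a (1/2) * G (V u)
          * (betaFn (1/2 - r*σ) (a + r*σ) / betaFn (1/2 - r*σ) (a + r*σ)) := by ring
    rw [h2, div_self hT.ne', mul_one]
  rw [mul_sub, mul_one, h1]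
  show (2 * b) ^ (-(σ * r)) / betaFn a (1 / 2)
      * (betaFn (1 / 2 - r * σ) (a + r * σ) - G (V u)) = _
  ring
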